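/- Second moment of the averaged m-direction (I-RDSA) gradient estimate: let f : ℝ^d → ℝ be differentiable with L-Lipschitz gradient, let c > 0 and m ≥ 1, and let μ be a Borel probability measure on ℝ^d such that ∫ ⟨z, u⟩·z dμ(z) = u for every u ∈ ℝ^d, ∫ ‖⟨g, z⟩·z‖² dμ(z) ≤ s·‖g‖² for every g ∈ ℝ^d (for some s > 0), and M := ∫ ‖z‖⁶ dμ(z) < ∞. Then for every x ∈ ℝ^d, ∫ ‖ (1/m)·Σ_{i=1}^m ((f(x + c·z_i) − f(x))/c)·z_i ‖² dμ^{⊗m}(z_1, …, z_m) ≤ 2(1 + s/m)·‖∇f(x)‖² + ((1 + m)/(2m))·c²L²·M. -/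

import Mathlib

open MeasureTheory
open scoped RealInnerProductSpace BigOperators

lemma aux_map_eval {E : Type*} [MeasurableSpace E] (μ : Measure E) [IsProbabilityMeasure μ]
    {m : ℕ} (i : Fin m) :
    Measure.map (fun zs : Fin m → E => zs i) (Measure.pi fun _ => μ) = μ := by
  ext s hs
  rw [Measure.map_apply (measurable_pi_apply i) hs]
  have hset : (fun zs : Fin m → E => zs i) ⁻¹' s
      = Set.pi Set.univ (fun k => if k = i then s else Set.univ) := by
    ext zs
    simp only [Set.mem_preimage, Set.mem_pi, Set.mem_univ, forall_true_left]
    constructor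
    · intro h k
      by_cases hk : k = i <;> simp [hk, h]
    · intro h
      have := h i
      simpa using this
  rw [hset, Measure.pi_pi]
  rw [Finset.prod_eq_single i (fun k _ hk => by simp [hk]) (by simp)]
  simp

lemma aux_map_pair {E : Type*} [MeasurableSpace E] (μ : Measure E) [IsProbabilityMeasure μ]
    {m : ℕ} {i j : Fin m} (hij : i ≠ j) :
    Measure.map (fun zs : Fin m → E => (zs i, zs j)) (Measure.pi fun _ => μ) = μ.prod μ := by
  refine (Measure.prod_eq fun s t hs ht => ?_).symm
  rw [Measure.map_apply ((measurable_pi_apply i).prodMk (measurable_pi_apply j)) (hs.prod ht)]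
  have hset : (fun zs : Fin m → E => (zs i, zs j)) ⁻¹' (s ×ˢ t)
      = Set.pi Set.univ (fun k => if k = i then s else if k = j then t else Set.univ) := by
    ext zs
    simp only [Set.mem_preimage, Set.mem_prod, Set.mem_pi, Set.mem_univ, forall_true_left]
    constructor
    · rintro ⟨h1, h2⟩ k
      by_cases hk : k = i
      · simp [hk, h1]
      · by_cases hk2 : k = j <;> simp [hk, hk2, h2, Ne.symm hij]
    · intro h
      refine ⟨by simpa using h i, ?_⟩
      have := h j
      simpa [Ne.symm hij] using this
  rw [hset, Measure.pi_pi]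
  have hval : ∀ k : Fin m, μ (if k = i then s else if k = j then t else Set.univ)
      = (if k = i then μ s else 1) * (if k = j then μ t else 1) := by
    intro k
    by_cases h1 : k = i
    · subst h1
      simp [hij]
    · by_cases h2 : k = j <;> simp [h1, h2, Ne.symm hij]
  simp_rw [hval]
  rw [Finset.prod_mul_distrib, Finset.prod_ite_eq' Finset.univ i (fun _ => μ s),
    Finset.prod_ite_eq' Finset.univ j (fun _ => μ t)]
  simp

lemma aux_integral_eval {E F : Type*} [MeasurableSpace E] [NormedAddCommGroup F]
    [NormedSpace ℝ F] (μ : Measure E) [IsProbabilityMeasure μ] {m : ℕ} (i : Fin m)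
    (h : E → F) (hmeas : AEStronglyMeasurable h μ) :
    ∫ zs : Fin m → E, h (zs i) ∂(Measure.pi fun _ => μ) = ∫ z, h z ∂μ := by
  have hm : AEStronglyMeasurable h
      (Measure.map (fun zs : Fin m → E => zs i) (Measure.pi fun _ => μ)) := by
    rwa [aux_map_eval]
  have := integral_map (measurable_pi_apply (X := fun _ : Fin m => E) i).aemeasurable hm
  rw [aux_map_eval] at this
  exact this.symm

lemma aux_integrable_eval {E F : Type*} [MeasurableSpace E] [NormedAddCommGroup F]
    (μ : Measure E) [IsProbabilityMeasure μ] {m : ℕ} (i : Fin m)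
    (h : E → F) (hmeas : AEStronglyMeasurable h μ) (hint : Integrable h μ) :
    Integrable (fun zs : Fin m → E => h (zs i)) (Measure.pi fun _ => μ) := by
  have hm : AEStronglyMeasurable h
      (Measure.map (fun zs : Fin m → E => zs i) (Measure.pi fun _ => μ)) := by
    rwa [aux_map_eval]
  have := (integrable_map_measure hm (measurable_pi_apply i).aemeasurable).mp
    (by rwa [aux_map_eval])
  simpa [Function.comp_def] using this

lemma aux_integral_pair {E F : Type*} [MeasurableSpace E] [NormedAddCommGroup F]
    [NormedSpace ℝ F] (μ : Measure E) [IsProbabilityMeasure μ] {m : ℕ} {i j : Fin m}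
    (hij : i ≠ j) (h : E × E → F) (hmeas : AEStronglyMeasurable h (μ.prod μ)) :
    ∫ zs : Fin m → E, h (zs i, zs j) ∂(Measure.pi fun _ => μ) = ∫ p, h p ∂(μ.prod μ) := by
  have hm : AEStronglyMeasurable h
      (Measure.map (fun zs : Fin m → E => (zs i, zs j)) (Measure.pi fun _ => μ)) := by
    rwa [aux_map_pair μ hij]
  have := integral_map ((measurable_pi_apply (X := fun _ : Fin m => E) i).prodMk (measurable_pi_apply j)).aemeasurable hm
  rw [aux_map_pair μ hij] at this
  exact this.symm

lemma aux_integrable_pair {E F : Type*} [MeasurableSpace E] [NormedAddCommGroup F]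
    (μ : Measure E) [IsProbabilityMeasure μ] {m : ℕ} {i j : Fin m} (hij : i ≠ j)
    (h : E × E → F) (hmeas : AEStronglyMeasurable h (μ.prod μ))
    (hint : Integrable h (μ.prod μ)) :
    Integrable (fun zs : Fin m → E => h (zs i, zs j)) (Measure.pi fun _ => μ) := by
  have hm : AEStronglyMeasurable h
      (Measure.map (fun zs : Fin m → E => (zs i, zs j)) (Measure.pi fun _ => μ)) := by
    rwa [aux_map_pair μ hij]
  have := (integrable_map_measure hm
    ((measurable_pi_apply i).prodMk (measurable_pi_apply j)).aemeasurable).mp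
    (by rwa [aux_map_pair μ hij])
  simpa [Function.comp_def] using this

lemma aux_descent {d : ℕ} (f : EuclideanSpace ℝ (Fin d) → ℝ) (hfdiff : Differentiable ℝ f)
    (L : ℝ) (hL0 : 0 ≤ L)
    (hflip : ∀ u w, ‖gradient f u - gradient f w‖ ≤ L * ‖u - w‖)
    (x v : EuclideanSpace ℝ (Fin d)) :
    |f (x + v) - f x - ⟪gradient f x, v⟫| ≤ L / 2 * ‖v‖ ^ 2 := by
  set g := gradient f x with hg
  have hDer : ∀ u : ℝ, HasDerivAt (fun t : ℝ => f (x + t • v))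
      ⟪gradient f (x + u • v), v⟫ u := by
    intro u
    have h1 : HasDerivAt (fun t : ℝ => x + t • v) v u := by
      simpa using ((hasDerivAt_id u).smul_const v).const_add x
    have h2 := ((hfdiff (x + u • v)).hasGradientAt.hasFDerivAt).comp_hasDerivAt u h1
    simpa [InnerProductSpace.toDual_apply_apply, Function.comp_def] using h2
  set K := L * ‖v‖ ^ 2 with hK
  have hK0 : 0 ≤ K := mul_nonneg hL0 (sq_nonneg _)
  have hbound : ∀ t : ℝ, 0 ≤ t →
      |⟪gradient f (x + t • v), v⟫ - ⟪g, v⟫| ≤ K * t := by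
    intro t ht
    rw [← inner_sub_left]
    calc |⟪gradient f (x + t • v) - g, v⟫| ≤ ‖gradient f (x + t • v) - g‖ * ‖v‖ :=
          abs_real_inner_le_norm _ _
      _ ≤ (L * ‖(x + t • v) - x‖) * ‖v‖ :=
          mul_le_mul_of_nonneg_right (hflip _ _) (norm_nonneg _)
      _ = K * t := by
          have hx : x + t • v - x = t • v := by abel
          rw [hx, norm_smul, Real.norm_eq_abs, abs_of_nonneg ht, hK]
          ring
  set ψ : ℝ → ℝ := fun t => f (x + t • v) - t * ⟪g, v⟫ with hψdef
  have hψ : ∀ u : ℝ, HasDerivAt ψ (⟪gradient f (x + u • v), v⟫ - ⟪g, v⟫) u := by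
    intro u
    exact (hDer u).sub (hasDerivAt_mul_const _)
  have hψ0 : ψ 0 = f x := by simp [hψdef]
  have hψ1 : ψ 1 = f (x + v) - ⟪g, v⟫ := by simp [hψdef]
  -- upper bound
  have upper : ψ 1 - ψ 0 ≤ K / 2 := by
    set θ : ℝ → ℝ := fun t => K / 2 * t ^ 2 - ψ t with hθdef
    have hθ : ∀ u : ℝ, HasDerivAt θ
        (K * u - (⟪gradient f (x + u • v), v⟫ - ⟪g, v⟫)) u := by
      intro u
      have h1 : HasDerivAt (fun t : ℝ => K / 2 * t ^ 2) (K / 2 * (2 * u ^ 1)) u :=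
        (hasDerivAt_pow 2 u).const_mul (K / 2)
      have := h1.sub (hψ u)
      convert this using 1
      · rfl
      · rfl
      · rfl
      · ring
    have hmono : MonotoneOn θ (Set.Icc (0:ℝ) 1) := by
      apply monotoneOn_of_deriv_nonneg (convex_Icc 0 1)
      · exact (fun u _ => ((hθ u).differentiableAt.continuousAt.continuousWithinAt))
      · exact fun u _ => ((hθ u).differentiableAt.differentiableWithinAt)
      · intro t ht
        rw [interior_Icc] at ht
        rw [(hθ t).deriv]
        have h2 := hbound t ht.1.le
        have h3 : K * t ≤ K * 1 := by
          apply mul_le_mul_of_nonneg_left ht.2.le hK0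
        have := (abs_le.mp h2).2
        nlinarith [(abs_le.mp h2).2]
    have := hmono (Set.left_mem_Icc.mpr zero_le_one) (Set.right_mem_Icc.mpr zero_le_one)
      zero_le_one
    simp only [hθdef] at this
    nlinarith [this]
  -- lower bound
  have lower : -(K / 2) ≤ ψ 1 - ψ 0 := by
    set θ : ℝ → ℝ := fun t => K / 2 * t ^ 2 + ψ t with hθdef
    have hθ : ∀ u : ℝ, HasDerivAt θ
        (K * u + (⟪gradient f (x + u • v), v⟫ - ⟪g, v⟫)) u := by
      intro u
      have h1 : HasDerivAt (fun t : ℝ => K / 2 * t ^ 2) (K / 2 * (2 * u ^ 1)) u :=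
        (hasDerivAt_pow 2 u).const_mul (K / 2)
      have := h1.add (hψ u)
      convert this using 1
      · rfl
      · rfl
      · rfl
      · ring
    have hmono : MonotoneOn θ (Set.Icc (0:ℝ) 1) := by
      apply monotoneOn_of_deriv_nonneg (convex_Icc 0 1)
      · exact (fun u _ => ((hθ u).differentiableAt.continuousAt.continuousWithinAt))
      · exact fun u _ => ((hθ u).differentiableAt.differentiableWithinAt)
      · intro t ht
        rw [interior_Icc] at ht
        rw [(hθ t).deriv]
        have h2 := hbound t ht.1.le
        nlinarith [(abs_le.mp h2).1]
    have := hmono (Set.left_mem_Icc.mpr zero_le_one) (Set.right_mem_Icc.mpr zero_le_one)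
      zero_le_one
    simp only [hθdef] at this
    nlinarith [this]
  rw [hψ1, hψ0] at upper lower
  rw [abs_le]
  constructor <;> [nlinarith [lower]; nlinarith [upper]]

lemma aux_sq (a T Q W mr C : ℝ) (ha : 0 ≤ a) (hT : 0 ≤ T) (hC : 0 ≤ C) (hW : 0 ≤ W)
    (hmr : 1 ≤ mr) (h1 : T ^ 2 ≤ mr * Q) (h2 : Q ≤ C * W) :
    (a + 1 / mr * T) ^ 2 ≤ 2 * a ^ 2 + 2 * C / mr * W := by
  have hmr0 : 0 < mr := lt_of_lt_of_le one_pos hmr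
  have hQ : 0 ≤ Q := by nlinarith [sq_nonneg T]
  calc (a + 1 / mr * T) ^ 2 ≤ 2 * a ^ 2 + 2 * (1 / mr * T) ^ 2 := by
        nlinarith [sq_nonneg (a - 1 / mr * T)]
    _ = 2 * a ^ 2 + 2 * (T ^ 2 / mr ^ 2) := by
        rw [mul_pow]; ring
    _ ≤ 2 * a ^ 2 + 2 * ((mr * Q) / mr ^ 2) := by gcongr
    _ = 2 * a ^ 2 + 2 * (Q / mr) := by
        rw [pow_two mr, mul_div_mul_left _ _ (ne_of_gt hmr0)]
    _ ≤ 2 * a ^ 2 + 2 * ((C * W) / mr) := by gcongr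
    _ = 2 * a ^ 2 + 2 * C / mr * W := by ring

set_option maxHeartbeats 1000000 in
theorem irdsa_second_moment
    (d : ℕ) (hd : 1 ≤ d)
    (f : EuclideanSpace ℝ (Fin d) → ℝ)
    (hfdiff : Differentiable ℝ f)
    (L : ℝ) (hL : 0 < L)
    (hflip : ∀ u w, ‖gradient f u - gradient f w‖ ≤ L * ‖u - w‖)
    (c : ℝ) (hc : 0 < c)
    (m : ℕ) (hm : 1 ≤ m)
    (μ : Measure (EuclideanSpace ℝ (Fin d))) [IsProbabilityMeasure μ]
    (hmean : ∀ u : EuclideanSpace ℝ (Fin d), (∫ z, ⟪z, u⟫ • z ∂μ) = u)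
    (s : ℝ) (hs : 0 < s)
    (hsbound : ∀ g : EuclideanSpace ℝ (Fin d),
      (∫ z, ‖(⟪g, z⟫ : ℝ) • z‖ ^ 2 ∂μ) ≤ s * ‖g‖ ^ 2)
    (M : ℝ) (hM6 : Integrable (fun z : EuclideanSpace ℝ (Fin d) => ‖z‖ ^ 6) μ)
    (hM : M = ∫ z, ‖z‖ ^ 6 ∂μ)
    (x : EuclideanSpace ℝ (Fin d)) :
    (∫ zs : Fin m → EuclideanSpace ℝ (Fin d),
        ‖(1 / (m : ℝ)) • ∑ i : Fin m, ((f (x + c • zs i) - f x) / c) • zs i‖ ^ 2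
        ∂(Measure.pi fun _ : Fin m => μ)) ≤
      2 * (1 + s / m) * ‖gradient f x‖ ^ 2 +
        ((1 + (m : ℝ)) / (2 * m)) * c ^ 2 * L ^ 2 * M := by
  classical
  have hmr1 : (1 : ℝ) ≤ (m : ℝ) := by exact_mod_cast hm
  have hmr0 : (0 : ℝ) < (m : ℝ) := lt_of_lt_of_le one_pos hmr1
  set g := gradient f x with hgdef
  set A : EuclideanSpace ℝ (Fin d) → EuclideanSpace ℝ (Fin d) :=
    fun z => (⟪g, z⟫ : ℝ) • z with hAdef
  set R : EuclideanSpace ℝ (Fin d) → EuclideanSpace ℝ (Fin d) :=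
    fun z => ((f (x + c • z) - f x) / c) • z - A z with hRdef
  have hAR : ∀ z, ((f (x + c • z) - f x) / c) • z = A z + R z := by
    intro z; simp [hRdef]
  -- descent bound
  have hRb : ∀ z, ‖R z‖ ≤ (c * L / 2) * ‖z‖ ^ 3 := by
    intro z
    have h1 : R z = ((f (x + c • z) - f x) / c - ⟪g, z⟫) • z := by
      rw [hRdef, hAdef, sub_smul]
    have h2 : |(f (x + c • z) - f x) / c - ⟪g, z⟫| ≤ (c * L / 2) * ‖z‖ ^ 2 := by
      have h3 := aux_descent f hfdiff L hL.le hflip x (c • z)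
      have h4 : ⟪g, c • z⟫ = c * ⟪g, z⟫ := real_inner_smul_right _ _ _
      rw [← hgdef] at h3
      have h5 : (f (x + c • z) - f x) / c - ⟪g, z⟫
          = (f (x + c • z) - f x - ⟪g, c • z⟫) / c := by
        rw [h4]; field_simp
      rw [h5, abs_div, abs_of_pos hc, div_le_iff₀ hc]
      calc |f (x + c • z) - f x - ⟪g, c • z⟫| ≤ L / 2 * ‖c • z‖ ^ 2 := h3
        _ = c * L / 2 * ‖z‖ ^ 2 * c := by
            rw [norm_smul, Real.norm_eq_abs, abs_of_pos hc]; ring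
    rw [h1, norm_smul, Real.norm_eq_abs]
    calc |(f (x + c • z) - f x) / c - ⟪g, z⟫| * ‖z‖
        ≤ ((c * L / 2) * ‖z‖ ^ 2) * ‖z‖ :=
          mul_le_mul_of_nonneg_right h2 (norm_nonneg _)
      _ = (c * L / 2) * ‖z‖ ^ 3 := by ring
  -- integrability of powers of the norm
  have hz_pow : ∀ k : ℕ, k ≤ 6 → Integrable (fun z : EuclideanSpace ℝ (Fin d) => ‖z‖ ^ k) μ := by
    intro k hk
    refine Integrable.mono' ((integrable_const (1:ℝ)).add hM6)
      ((measurable_norm.pow_const k).aestronglyMeasurable)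
      (Filter.Eventually.of_forall fun z => ?_)
    simp only [Pi.add_apply]
    rw [Real.norm_eq_abs, abs_of_nonneg (by positivity)]
    rcases le_or_gt ‖z‖ 1 with h | h
    · have h1 : ‖z‖ ^ k ≤ 1 := pow_le_one₀ (norm_nonneg _) h
      have h2 : (0:ℝ) ≤ ‖z‖ ^ 6 := by positivity
      linarith
    · have h1 : ‖z‖ ^ k ≤ ‖z‖ ^ 6 := pow_le_pow_right₀ h.le hk
      linarith
  have hAcont : Continuous A := by
    rw [hAdef]; fun_prop
  have hAbound : ∀ z, ‖A z‖ ≤ ‖g‖ * ‖z‖ ^ 2 := by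
    intro z
    rw [hAdef]
    calc ‖(⟪g, z⟫ : ℝ) • z‖ = |(⟪g, z⟫ : ℝ)| * ‖z‖ := by
          rw [norm_smul, Real.norm_eq_abs]
      _ ≤ (‖g‖ * ‖z‖) * ‖z‖ :=
          mul_le_mul_of_nonneg_right (abs_real_inner_le_norm _ _) (norm_nonneg _)
      _ = ‖g‖ * ‖z‖ ^ 2 := by ring
  have hAint : Integrable A μ := by
    refine Integrable.mono' ((hz_pow 2 (by norm_num)).const_mul ‖g‖)
      hAcont.aestronglyMeasurable (Filter.Eventually.of_forall fun z => hAbound z)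
  have hAsq : Integrable (fun z => ‖A z‖ ^ 2) μ := by
    refine Integrable.mono' ((hz_pow 4 (by norm_num)).const_mul (‖g‖ ^ 2))
      ((hAcont.norm.pow 2).aestronglyMeasurable)
      (Filter.Eventually.of_forall fun z => ?_)
    rw [Real.norm_eq_abs, abs_of_nonneg (by positivity)]
    calc ‖A z‖ ^ 2 ≤ (‖g‖ * ‖z‖ ^ 2) ^ 2 :=
          pow_le_pow_left₀ (norm_nonneg _) (hAbound z) 2
      _ = ‖g‖ ^ 2 * ‖z‖ ^ 4 := by ring
  have hintA : ∫ z, A z ∂μ = g := by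
    have h0 : ∀ z, A z = (⟪z, g⟫ : ℝ) • z := fun z => by
      rw [hAdef]; dsimp only; rw [real_inner_comm]
    rw [integral_congr_ae (Filter.Eventually.of_forall h0)]
    exact hmean g
  -- inner product integrands over the product measure
  have hinner_cont : Continuous fun p : EuclideanSpace ℝ (Fin d) × EuclideanSpace ℝ (Fin d) =>
      (⟪A p.1, A p.2⟫ : ℝ) := (hAcont.comp continuous_fst).inner (hAcont.comp continuous_snd)
  have hprod_int : Integrable (fun p : EuclideanSpace ℝ (Fin d) × EuclideanSpace ℝ (Fin d) =>
      (⟪A p.1, A p.2⟫ : ℝ)) (μ.prod μ) := by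
    refine Integrable.mono' (Integrable.mul_prod hAint.norm hAint.norm)
      hinner_cont.aestronglyMeasurable (Filter.Eventually.of_forall fun p => ?_)
    rw [Real.norm_eq_abs]
    exact abs_real_inner_le_norm _ _
  have hinner_int : ∀ i j : Fin m,
      Integrable (fun zs : Fin m → EuclideanSpace ℝ (Fin d) => (⟪A (zs i), A (zs j)⟫ : ℝ))
        (Measure.pi fun _ => μ) := by
    intro i j
    by_cases hij : i = j
    · subst hij
      have hAA : Integrable (fun z => (⟪A z, A z⟫ : ℝ)) μ := by
        refine hAsq.congr (Filter.Eventually.of_forall fun z => ?_)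
        exact (real_inner_self_eq_norm_sq (A z)).symm
      exact aux_integrable_eval μ i (fun z => (⟪A z, A z⟫ : ℝ))
        ((hAcont.inner hAcont).aestronglyMeasurable) hAA
    · exact aux_integrable_pair μ hij _ hinner_cont.aestronglyMeasurable hprod_int
  have hcross : ∀ i j : Fin m, i ≠ j →
      (∫ zs : Fin m → EuclideanSpace ℝ (Fin d), (⟪A (zs i), A (zs j)⟫ : ℝ)
        ∂(Measure.pi fun _ => μ)) = ‖g‖ ^ 2 := by
    intro i j hij
    rw [aux_integral_pair μ hij _ hinner_cont.aestronglyMeasurable]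
    rw [integral_prod _ hprod_int]
    have h1 : ∀ a, (∫ b, (⟪A a, A b⟫ : ℝ) ∂μ) = ⟪A a, g⟫ := by
      intro a
      rw [integral_inner hAint, hintA]
    rw [integral_congr_ae (Filter.Eventually.of_forall h1)]
    have h2 : ∀ a, (⟪A a, g⟫ : ℝ) = ⟪g, A a⟫ := fun a => real_inner_comm _ _
    rw [integral_congr_ae (Filter.Eventually.of_forall h2)]
    rw [integral_inner hAint, hintA, real_inner_self_eq_norm_sq]
  have hdiag : ∀ i : Fin m,
      (∫ zs : Fin m → EuclideanSpace ℝ (Fin d), (⟪A (zs i), A (zs i)⟫ : ℝ)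
        ∂(Measure.pi fun _ => μ)) ≤ s * ‖g‖ ^ 2 := by
    intro i
    rw [aux_integral_eval μ i (fun z => (⟪A z, A z⟫ : ℝ))
      ((hAcont.inner hAcont).aestronglyMeasurable)]
    have h2 : ∀ z, (⟪A z, A z⟫ : ℝ) = ‖A z‖ ^ 2 := fun z => real_inner_self_eq_norm_sq (A z)
    calc (∫ z, (⟪A z, A z⟫ : ℝ) ∂μ) = ∫ z, ‖A z‖ ^ 2 ∂μ :=
          integral_congr_ae (Filter.Eventually.of_forall h2)
      _ ≤ s * ‖g‖ ^ 2 := hsbound g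
  -- pointwise bound
  have hGpt : ∀ zs : Fin m → EuclideanSpace ℝ (Fin d),
      ‖(1 / (m : ℝ)) • ∑ i : Fin m, ((f (x + c • zs i) - f x) / c) • zs i‖ ^ 2
      ≤ 2 * ‖(1 / (m : ℝ)) • ∑ i : Fin m, A (zs i)‖ ^ 2
        + 2 * (c * L / 2) ^ 2 / (m : ℝ) * ∑ i : Fin m, ‖zs i‖ ^ 6 := by
    intro zs
    set a := ‖(1 / (m : ℝ)) • ∑ i : Fin m, A (zs i)‖ with hadef
    set T := ∑ i : Fin m, ‖R (zs i)‖ with hTdef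
    have hsum : ∑ i : Fin m, ((f (x + c • zs i) - f x) / c) • zs i
        = (∑ i : Fin m, A (zs i)) + ∑ i : Fin m, R (zs i) := by
      rw [← Finset.sum_add_distrib]
      exact Finset.sum_congr rfl fun i _ => hAR (zs i)
    have hs1 : ‖(1 / (m : ℝ)) • ∑ i : Fin m, ((f (x + c • zs i) - f x) / c) • zs i‖
        ≤ a + 1 / (m : ℝ) * T := by
      rw [hsum, smul_add]
      refine le_trans (norm_add_le _ _) ?_
      have h2 : ‖(1 / (m : ℝ)) • ∑ i : Fin m, R (zs i)‖
          = 1 / (m : ℝ) * ‖∑ i : Fin m, R (zs i)‖ := by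
        rw [norm_smul, Real.norm_eq_abs, abs_of_pos (by positivity)]
      rw [h2]
      have h3 : ‖∑ i : Fin m, R (zs i)‖ ≤ T := by
        rw [hTdef]; exact norm_sum_le _ _
      have h4 : (0:ℝ) ≤ 1 / (m : ℝ) := by positivity
      nlinarith [mul_le_mul_of_nonneg_left h3 h4]
    have hs2 : T ^ 2 ≤ (m : ℝ) * ∑ i : Fin m, ‖R (zs i)‖ ^ 2 := by
      rw [hTdef]
      simpa using sq_sum_le_card_mul_sum_sq
        (s := (Finset.univ : Finset (Fin m))) (f := fun i => ‖R (zs i)‖)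
    have hs3 : ∑ i : Fin m, ‖R (zs i)‖ ^ 2 ≤ (c * L / 2) ^ 2 * ∑ i : Fin m, ‖zs i‖ ^ 6 := by
      rw [Finset.mul_sum]
      refine Finset.sum_le_sum fun i _ => ?_
      calc ‖R (zs i)‖ ^ 2 ≤ (c * L / 2 * ‖zs i‖ ^ 3) ^ 2 :=
            pow_le_pow_left₀ (norm_nonneg _) (hRb (zs i)) 2
        _ = (c * L / 2) ^ 2 * ‖zs i‖ ^ 6 := by ring
    calc ‖(1 / (m : ℝ)) • ∑ i : Fin m, ((f (x + c • zs i) - f x) / c) • zs i‖ ^ 2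
        ≤ (a + 1 / (m : ℝ) * T) ^ 2 := pow_le_pow_left₀ (norm_nonneg _) hs1 2
      _ ≤ 2 * a ^ 2 + 2 * (c * L / 2) ^ 2 / (m : ℝ) * ∑ i : Fin m, ‖zs i‖ ^ 6 :=
          aux_sq a T (∑ i : Fin m, ‖R (zs i)‖ ^ 2) (∑ i : Fin m, ‖zs i‖ ^ 6) (m : ℝ)
            ((c * L / 2) ^ 2) (norm_nonneg _)
            (by rw [hTdef]; exact Finset.sum_nonneg fun i _ => norm_nonneg _)
            (by positivity) (Finset.sum_nonneg fun i _ => by positivity) hmr1 hs2 hs3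
  -- rewriting the quadratic term as a double sum
  have hGA_eq : (fun zs : Fin m → EuclideanSpace ℝ (Fin d) =>
        ‖(1 / (m : ℝ)) • ∑ i : Fin m, A (zs i)‖ ^ 2)
      = fun zs => (1 / (m : ℝ)) ^ 2
          * ∑ i : Fin m, ∑ j : Fin m, (⟪A (zs i), A (zs j)⟫ : ℝ) := by
    funext zs
    rw [norm_smul, Real.norm_eq_abs, abs_of_pos (by positivity : (0:ℝ) < 1 / (m : ℝ)), mul_pow]
    congr 1
    rw [← real_inner_self_eq_norm_sq, sum_inner]
    exact Finset.sum_congr rfl fun i _ => inner_sum _ _ _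
  have hGAint : Integrable (fun zs : Fin m → EuclideanSpace ℝ (Fin d) =>
      ‖(1 / (m : ℝ)) • ∑ i : Fin m, A (zs i)‖ ^ 2) (Measure.pi fun _ => μ) := by
    rw [hGA_eq]
    exact (integrable_finset_sum _ fun i _ =>
      integrable_finset_sum _ fun j _ => hinner_int i j).const_mul _
  have hWint : Integrable (fun zs : Fin m → EuclideanSpace ℝ (Fin d) =>
      ∑ i : Fin m, ‖zs i‖ ^ 6) (Measure.pi fun _ => μ) :=
    integrable_finset_sum _ fun i _ => aux_integrable_eval μ i (fun z => ‖z‖ ^ 6)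
      ((measurable_norm.pow_const 6).aestronglyMeasurable) hM6
  have hGint : Integrable (fun zs : Fin m → EuclideanSpace ℝ (Fin d) =>
      2 * ‖(1 / (m : ℝ)) • ∑ i : Fin m, A (zs i)‖ ^ 2
        + 2 * (c * L / 2) ^ 2 / (m : ℝ) * ∑ i : Fin m, ‖zs i‖ ^ 6) (Measure.pi fun _ => μ) :=
    (hGAint.const_mul 2).add (hWint.const_mul _)
  have hstep1 : (∫ zs : Fin m → EuclideanSpace ℝ (Fin d),
      ‖(1 / (m : ℝ)) • ∑ i : Fin m, ((f (x + c • zs i) - f x) / c) • zs i‖ ^ 2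
      ∂(Measure.pi fun _ : Fin m => μ))
      ≤ ∫ zs : Fin m → EuclideanSpace ℝ (Fin d),
        (2 * ‖(1 / (m : ℝ)) • ∑ i : Fin m, A (zs i)‖ ^ 2
          + 2 * (c * L / 2) ^ 2 / (m : ℝ) * ∑ i : Fin m, ‖zs i‖ ^ 6)
        ∂(Measure.pi fun _ : Fin m => μ) :=
    integral_mono_of_nonneg (Filter.Eventually.of_forall fun zs => by positivity) hGint
      (Filter.Eventually.of_forall hGpt)
  have hIG : (∫ zs : Fin m → EuclideanSpace ℝ (Fin d),
      (2 * ‖(1 / (m : ℝ)) • ∑ i : Fin m, A (zs i)‖ ^ 2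
        + 2 * (c * L / 2) ^ 2 / (m : ℝ) * ∑ i : Fin m, ‖zs i‖ ^ 6)
      ∂(Measure.pi fun _ : Fin m => μ))
      = 2 * (∫ zs : Fin m → EuclideanSpace ℝ (Fin d),
          ‖(1 / (m : ℝ)) • ∑ i : Fin m, A (zs i)‖ ^ 2 ∂(Measure.pi fun _ : Fin m => μ))
        + 2 * (c * L / 2) ^ 2 / (m : ℝ) * (∫ zs : Fin m → EuclideanSpace ℝ (Fin d),
          ∑ i : Fin m, ‖zs i‖ ^ 6 ∂(Measure.pi fun _ : Fin m => μ)) := by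
    rw [integral_add (hGAint.const_mul 2) (hWint.const_mul _), integral_const_mul,
      integral_const_mul]
  have hIW : (∫ zs : Fin m → EuclideanSpace ℝ (Fin d),
      ∑ i : Fin m, ‖zs i‖ ^ 6 ∂(Measure.pi fun _ : Fin m => μ)) = (m : ℝ) * M := by
    rw [integral_finset_sum _ fun i _ => aux_integrable_eval μ i (fun z => ‖z‖ ^ 6)
      ((measurable_norm.pow_const 6).aestronglyMeasurable) hM6]
    have h1 : ∀ i : Fin m, (∫ zs : Fin m → EuclideanSpace ℝ (Fin d),
        ‖zs i‖ ^ 6 ∂(Measure.pi fun _ : Fin m => μ)) = M := fun i => by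
      rw [aux_integral_eval μ i (fun z => ‖z‖ ^ 6)
        ((measurable_norm.pow_const 6).aestronglyMeasurable), ← hM]
    rw [Finset.sum_congr rfl fun i _ => h1 i, Finset.sum_const, Finset.card_univ,
      Fintype.card_fin, nsmul_eq_mul]
  have hIA : (∫ zs : Fin m → EuclideanSpace ℝ (Fin d),
      ‖(1 / (m : ℝ)) • ∑ i : Fin m, A (zs i)‖ ^ 2 ∂(Measure.pi fun _ : Fin m => μ))
      ≤ (1 / (m : ℝ)) ^ 2 * ((m : ℝ) * (s * ‖g‖ ^ 2)
        + (m : ℝ) * (((m : ℝ) - 1) * ‖g‖ ^ 2)) := by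
    rw [hGA_eq, integral_const_mul,
      integral_finset_sum _ fun i (_ : i ∈ Finset.univ) =>
        integrable_finset_sum _ fun j _ => hinner_int i j]
    refine mul_le_mul_of_nonneg_left ?_ (by positivity)
    have h1 : ∀ i : Fin m, (∫ zs : Fin m → EuclideanSpace ℝ (Fin d),
        ∑ j : Fin m, (⟪A (zs i), A (zs j)⟫ : ℝ) ∂(Measure.pi fun _ : Fin m => μ))
        = ∑ j : Fin m, ∫ zs : Fin m → EuclideanSpace ℝ (Fin d),
          (⟪A (zs i), A (zs j)⟫ : ℝ) ∂(Measure.pi fun _ : Fin m => μ) :=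
      fun i => integral_finset_sum _ fun j _ => hinner_int i j
    rw [Finset.sum_congr rfl fun i _ => h1 i]
    have hper : ∀ i : Fin m, (∑ j : Fin m, ∫ zs : Fin m → EuclideanSpace ℝ (Fin d),
        (⟪A (zs i), A (zs j)⟫ : ℝ) ∂(Measure.pi fun _ : Fin m => μ))
        ≤ s * ‖g‖ ^ 2 + ((m : ℝ) - 1) * ‖g‖ ^ 2 := by
      intro i
      rw [← Finset.add_sum_erase _ _ (Finset.mem_univ i)]
      refine add_le_add (hdiag i) ?_
      have he : ∀ j ∈ Finset.univ.erase i,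
          (∫ zs : Fin m → EuclideanSpace ℝ (Fin d),
            (⟪A (zs i), A (zs j)⟫ : ℝ) ∂(Measure.pi fun _ : Fin m => μ)) = ‖g‖ ^ 2 :=
        fun j hj => hcross i j (Ne.symm (Finset.mem_erase.mp hj).1)
      rw [Finset.sum_congr rfl he, Finset.sum_const,
        Finset.card_erase_of_mem (Finset.mem_univ i), Finset.card_univ, Fintype.card_fin,
        nsmul_eq_mul, Nat.cast_sub hm, Nat.cast_one]
    calc (∑ i : Fin m, ∑ j : Fin m, ∫ zs : Fin m → EuclideanSpace ℝ (Fin d),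
          (⟪A (zs i), A (zs j)⟫ : ℝ) ∂(Measure.pi fun _ : Fin m => μ))
        ≤ ∑ _i : Fin m, (s * ‖g‖ ^ 2 + ((m : ℝ) - 1) * ‖g‖ ^ 2) :=
          Finset.sum_le_sum fun i _ => hper i
      _ = (m : ℝ) * (s * ‖g‖ ^ 2) + (m : ℝ) * (((m : ℝ) - 1) * ‖g‖ ^ 2) := by
          rw [Finset.sum_const, Finset.card_univ, Fintype.card_fin, nsmul_eq_mul]
          ring
  -- final arithmetic
  have hM0 : 0 ≤ M := hM ▸ integral_nonneg fun z => by positivity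
  have hne : (m : ℝ) ≠ 0 := ne_of_gt hmr0
  have harith : (1 / (m : ℝ)) ^ 2 * ((m : ℝ) * (s * ‖g‖ ^ 2)
      + (m : ℝ) * (((m : ℝ) - 1) * ‖g‖ ^ 2)) ≤ (1 + s / (m : ℝ)) * ‖g‖ ^ 2 := by
    have heq : (1 / (m : ℝ)) ^ 2 * ((m : ℝ) * (s * ‖g‖ ^ 2)
        + (m : ℝ) * (((m : ℝ) - 1) * ‖g‖ ^ 2))
        = (s / (m : ℝ)) * ‖g‖ ^ 2 + (((m : ℝ) - 1) / (m : ℝ)) * ‖g‖ ^ 2 := by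
      field_simp
    rw [heq]
    have h2 : ((m : ℝ) - 1) / (m : ℝ) ≤ 1 := by
      rw [div_le_one hmr0]; linarith
    nlinarith [mul_le_mul_of_nonneg_right h2 (sq_nonneg ‖g‖)]
  have key1 : 2 * (∫ zs : Fin m → EuclideanSpace ℝ (Fin d),
      ‖(1 / (m : ℝ)) • ∑ i : Fin m, A (zs i)‖ ^ 2 ∂(Measure.pi fun _ : Fin m => μ))
      ≤ 2 * (1 + s / (m : ℝ)) * ‖g‖ ^ 2 := by
    have := le_trans hIA harith
    linarith
  have key2 : 2 * (c * L / 2) ^ 2 / (m : ℝ) * ((m : ℝ) * M)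
      ≤ (1 + (m : ℝ)) / (2 * (m : ℝ)) * c ^ 2 * L ^ 2 * M := by
    have heq : 2 * (c * L / 2) ^ 2 / (m : ℝ) * ((m : ℝ) * M) = c ^ 2 * L ^ 2 / 2 * M := by
      field_simp
    rw [heq]
    have h3 : (1 : ℝ) / 2 ≤ (1 + (m : ℝ)) / (2 * (m : ℝ)) := by
      rw [div_le_div_iff₀ (by norm_num) (by positivity)]
      linarith
    have h4 : c ^ 2 * L ^ 2 / 2 ≤ (1 + (m : ℝ)) / (2 * (m : ℝ)) * (c ^ 2 * L ^ 2) := by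
      nlinarith [mul_le_mul_of_nonneg_right h3 (by positivity : (0:ℝ) ≤ c ^ 2 * L ^ 2)]
    calc c ^ 2 * L ^ 2 / 2 * M ≤ (1 + (m : ℝ)) / (2 * (m : ℝ)) * (c ^ 2 * L ^ 2) * M :=
          mul_le_mul_of_nonneg_right h4 hM0
      _ = (1 + (m : ℝ)) / (2 * (m : ℝ)) * c ^ 2 * L ^ 2 * M := by ring
  refine le_trans hstep1 ?_
  rw [hIG, hIW]
  linarith
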